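/- Let $\Omega\subset\mathbb{R}^N$ be a bounded open set, $G\subset\Omega$ measurable, and let $w_n$ be measurable functions with $0\le w_n\le M$ a.e. and $w_n\to\chi_G$ a.e. in $\Omega$. Let $u_n\in W^{1,2}(\Omega)$ with $\|u_n\|_{L^\infty(\Omega)}\le C$ and suppose $\sqrt{w_n}\nabla u_n$ is bounded in $L^2(\Omega,\mathbb{R}^N)$, converging weakly in $L^2$ to some $V$. If for every ball $B_{2R}(y)\Subset\Omega\setminus\overline{G}$ one has $\int_{B_R(y)} w_n|\nabla u_n|^2 \le \frac{C'}{R^2}\int_{B_{2R}(y)} w_n u_n^2$ for all $n$, then $V=0$ a.e. in $\Omega\setminus\overline{G}$. -/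

import Mathlib

open MeasureTheory Metric Set Filter
open scoped ENNReal RealInnerProductSpace

noncomputable section

abbrev Euc (n : ℕ) : Type := EuclideanSpace ℝ (Fin n)

/-- **Localization of the weak limit (Theorem 4.2, localization step).** If `w_k → χ_G` a.e.
with `0 ≤ w_k ≤ M`, `‖u_k‖_∞ ≤ C`, `√w_k ∇u_k` (here `∇u_k = g_k`) is bounded in `L²` and
converges weakly in `L²(Ω)` to `V`, and the Caccioppoli inequality
`∫_{B_R} w_k|g_k|² ≤ (C'/R²)∫_{B_{2R}} w_k u_k²` holds on every ball `B_{2R} ⋐ Ω \ closure G`,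
then `V = 0` a.e. in `Ω \ closure G`. -/
theorem weak_limit_vanishes_outside {n : ℕ} (Ω : Set (Euc n)) (hΩo : IsOpen Ω)
    (hΩb : Bornology.IsBounded Ω)
    (G : Set (Euc n)) (hGm : MeasurableSet G) (hGΩ : G ⊆ Ω)
    (M C C' C'' : ℝ)
    (w : ℕ → Euc n → ℝ) (u : ℕ → Euc n → ℝ) (g : ℕ → Euc n → Euc n)
    (V : Euc n → Euc n)
    (hwm : ∀ k, Measurable (w k))
    (hwb : ∀ k, ∀ᵐ x ∂volume.restrict Ω, 0 ≤ w k x ∧ w k x ≤ M)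
    (hwconv : ∀ᵐ x ∂volume.restrict Ω,
      Tendsto (fun k => w k x) atTop (nhds (G.indicator (fun _ => (1 : ℝ)) x)))
    (hum : ∀ k, AEMeasurable (u k) (volume.restrict Ω))
    (hub : ∀ k, ∀ᵐ x ∂volume.restrict Ω, |u k x| ≤ C)
    (hgm : ∀ k, AEStronglyMeasurable (g k) (volume.restrict Ω))
    (hgint : ∀ k, IntegrableOn (fun x => w k x * ‖g k x‖ ^ 2) Ω)
    (hgb : ∀ k, ∫ x in Ω, w k x * ‖g k x‖ ^ 2 ≤ C'')
    (hV : MemLp V 2 (volume.restrict Ω))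
    (hweak : ∀ φ : Euc n → Euc n, MemLp φ 2 (volume.restrict Ω) →
      Tendsto (fun k => ∫ x in Ω, ⟪Real.sqrt (w k x) • g k x, φ x⟫) atTop
        (nhds (∫ x in Ω, ⟪V x, φ x⟫)))
    (hcacc : ∀ k, ∀ (y : Euc n) (R : ℝ), 0 < R → ball y (2 * R) ⊆ Ω \ closure G →
      ∫ x in ball y R, w k x * ‖g k x‖ ^ 2 ≤
        (C' / R ^ 2) * ∫ x in ball y (2 * R), w k x * (u k x) ^ 2) :
    ∀ᵐ x ∂volume.restrict (Ω \ closure G), V x = 0 := by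
  classical
  -- Notation for the open region
  have hUo : IsOpen (Ω \ closure G) := hΩo.sdiff isClosed_closure
  -- STEP 1: the key estimate on a single ball.
  have key : ∀ (y : Euc n) (R : ℝ), 0 < R → ball y (2 * R) ⊆ Ω \ closure G →
      ∀ᵐ x ∂volume.restrict (ball y R), V x = 0 := by
    intro y R hR hball
    have hB2Ω : ball y (2 * R) ⊆ Ω := fun x hx => (hball hx).1
    have hBB2 : ball y R ⊆ ball y (2 * R) := ball_subset_ball (by linarith)
    have hBΩ : ball y R ⊆ Ω := fun x hx => hB2Ω (hBB2 hx)
    have hres2 : volume.restrict (ball y (2 * R)) ≤ volume.restrict Ω :=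
      Measure.restrict_mono hB2Ω le_rfl
    have hres1 : volume.restrict (ball y R) ≤ volume.restrict Ω :=
      Measure.restrict_mono hBΩ le_rfl
    -- a.e. bounds on the ball
    have hwb2 : ∀ k, ∀ᵐ x ∂volume.restrict (ball y (2 * R)), 0 ≤ w k x ∧ w k x ≤ M :=
      fun k => (hwb k).filter_mono (ae_mono hres2)
    have hub2 : ∀ k, ∀ᵐ x ∂volume.restrict (ball y (2 * R)), |u k x| ≤ C :=
      fun k => (hub k).filter_mono (ae_mono hres2)
    have hwb1 : ∀ k, ∀ᵐ x ∂volume.restrict (ball y R), 0 ≤ w k x ∧ w k x ≤ M :=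
      fun k => (hwb k).filter_mono (ae_mono hres1)
    -- w_k → 0 a.e. on the double ball
    have hwc2 : ∀ᵐ x ∂volume.restrict (ball y (2 * R)),
        Tendsto (fun k => w k x) atTop (nhds 0) := by
      have h1 := hwconv.filter_mono (ae_mono hres2)
      have h2 : ∀ᵐ x ∂volume.restrict (ball y (2 * R)), x ∈ ball y (2 * R) :=
        ae_restrict_mem measurableSet_ball
      filter_upwards [h1, h2] with x hx hxB
      have hxG : x ∉ G := fun hxG => (hball hxB).2 (subset_closure hxG)
      simpa [Set.indicator_of_notMem hxG] using hx
    have hμ2 : volume (ball y (2 * R)) < ⊤ := measure_ball_lt_top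
    have hconstM : Integrable (fun _ : Euc n => M) (volume.restrict (ball y (2 * R))) :=
      integrableOn_const hμ2.ne
    have hconstMC : Integrable (fun _ : Euc n => M * C ^ 2)
        (volume.restrict (ball y (2 * R))) := integrableOn_const hμ2.ne
    -- integrability of w_k on the double ball
    have hwint : ∀ k, Integrable (w k) (volume.restrict (ball y (2 * R))) := fun k =>
      hconstM.mono' (hwm k).aestronglyMeasurable
        ((hwb2 k).mono fun x hx => by
          rw [Real.norm_eq_abs, abs_of_nonneg hx.1]; exact hx.2)
    -- integrability of w_k u_k^2 on the double ball
    have huint : ∀ k, Integrable (fun x => w k x * (u k x) ^ 2)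
        (volume.restrict (ball y (2 * R))) := by
      intro k
      have hus : AEMeasurable (u k) (volume.restrict (ball y (2 * R))) :=
        (hum k).mono_measure hres2
      have hsm : AEStronglyMeasurable (fun x => w k x * (u k x) ^ 2)
          (volume.restrict (ball y (2 * R))) :=
        ((hwm k).aemeasurable.mul (hus.pow_const 2)).aestronglyMeasurable
      refine hconstMC.mono' hsm ?_
      filter_upwards [hwb2 k, hub2 k] with x hx hu
      have hu2 : (u k x) ^ 2 ≤ C ^ 2 := by nlinarith [sq_abs (u k x), abs_nonneg (u k x)]
      rw [Real.norm_eq_abs, abs_of_nonneg (mul_nonneg hx.1 (sq_nonneg _))]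
      nlinarith [hx.1, hx.2, sq_nonneg (u k x)]
    -- ∫ w_k over double ball → 0 by dominated convergence
    have hck : Tendsto (fun k => ∫ x in ball y (2 * R), w k x) atTop (nhds 0) := by
      have h := tendsto_integral_of_dominated_convergence (μ := volume.restrict (ball y (2 * R)))
        (F := fun k x => w k x) (f := fun _ => (0 : ℝ)) (fun _ => M)
        (fun k => (hwm k).aestronglyMeasurable) hconstM
        (fun k => (hwb2 k).mono fun x hx => by
          rw [Real.norm_eq_abs, abs_of_nonneg hx.1]; exact hx.2) hwc2
      simpa using h
    -- ∫ w_k u_k^2 over double ball → 0 by squeezing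
    have hbk0 : ∀ k, 0 ≤ ∫ x in ball y (2 * R), w k x * (u k x) ^ 2 := fun k =>
      integral_nonneg_of_ae ((hwb2 k).mono fun x hx => mul_nonneg hx.1 (sq_nonneg _))
    have hbkle : ∀ k, ∫ x in ball y (2 * R), w k x * (u k x) ^ 2 ≤
        C ^ 2 * ∫ x in ball y (2 * R), w k x := by
      intro k
      rw [← integral_const_mul]
      refine integral_mono_ae (huint k) ((hwint k).const_mul _) ?_
      filter_upwards [hwb2 k, hub2 k] with x hx hu
      have hu2 : (u k x) ^ 2 ≤ C ^ 2 := by nlinarith [sq_abs (u k x), abs_nonneg (u k x)]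
      nlinarith [hx.1]
    have hbk : Tendsto (fun k => ∫ x in ball y (2 * R), w k x * (u k x) ^ 2) atTop (nhds 0) := by
      refine tendsto_of_tendsto_of_tendsto_of_le_of_le tendsto_const_nhds ?_ hbk0 hbkle
      simpa using hck.const_mul (C ^ 2)
    -- ∫ w_k ‖g_k‖^2 over the ball → 0 by Caccioppoli + squeezing
    have hak0 : ∀ k, 0 ≤ ∫ x in ball y R, w k x * ‖g k x‖ ^ 2 := fun k =>
      integral_nonneg_of_ae ((hwb1 k).mono fun x hx => mul_nonneg hx.1 (sq_nonneg _))
    have hak : Tendsto (fun k => ∫ x in ball y R, w k x * ‖g k x‖ ^ 2) atTop (nhds 0) := by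
      refine tendsto_of_tendsto_of_tendsto_of_le_of_le tendsto_const_nhds ?_ hak0
        (fun k => hcacc k y R hR hball)
      simpa using hbk.const_mul (C' / R ^ 2)
    -- the L² functions on the small ball
    set μB := volume.restrict (ball y R) with hμB
    have hVmem : MemLp V 2 μB := hV.mono_measure hres1
    have hfm : ∀ k, AEStronglyMeasurable (fun x => Real.sqrt (w k x) • g k x) μB := fun k =>
      ((Real.continuous_sqrt.measurable.comp (hwm k)).aestronglyMeasurable).smul
        ((hgm k).mono_measure hres1)
    have hfnorm : ∀ k, ∀ᵐ x ∂μB, ‖Real.sqrt (w k x) • g k x‖ ^ 2 = w k x * ‖g k x‖ ^ 2 := by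
      intro k
      filter_upwards [hwb1 k] with x hx
      rw [norm_smul, Real.norm_eq_abs, abs_of_nonneg (Real.sqrt_nonneg _), mul_pow,
        Real.sq_sqrt hx.1]
    have hfmem : ∀ k, MemLp (fun x => Real.sqrt (w k x) • g k x) 2 μB := by
      intro k
      refine (memLp_two_iff_integrable_sq_norm (hfm k)).2 ?_
      exact ((hgint k).mono_set hBΩ).congr ((hfnorm k).mono fun x hx => hx.symm)
    -- the inner product estimate via Cauchy–Schwarz in L²
    set cV : ℝ := ‖hVmem.toLp V‖ with hcV
    have est : ∀ k, |∫ x in ball y R, ⟪Real.sqrt (w k x) • g k x, V x⟫| ≤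
        Real.sqrt (∫ x in ball y R, w k x * ‖g k x‖ ^ 2) * cV := by
      intro k
      have hip : ⟪(hfmem k).toLp _, hVmem.toLp V⟫ =
          ∫ x in ball y R, ⟪Real.sqrt (w k x) • g k x, V x⟫ := by
        rw [MeasureTheory.L2.inner_def]
        refine integral_congr_ae ?_
        filter_upwards [(hfmem k).coeFn_toLp, hVmem.coeFn_toLp] with x h1 h2
        rw [h1, h2]
      have hnormF : ‖(hfmem k).toLp _‖ =
          Real.sqrt (∫ x in ball y R, w k x * ‖g k x‖ ^ 2) := by
        have h1 : ⟪(hfmem k).toLp _, (hfmem k).toLp _⟫ =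
            ∫ x in ball y R, w k x * ‖g k x‖ ^ 2 := by
          rw [MeasureTheory.L2.inner_def]
          refine integral_congr_ae ?_
          filter_upwards [(hfmem k).coeFn_toLp, hfnorm k] with x h1 h2
          rw [h1, real_inner_self_eq_norm_sq, h2]
        have h2 : ‖(hfmem k).toLp _‖ ^ 2 = ∫ x in ball y R, w k x * ‖g k x‖ ^ 2 := by
          rw [← real_inner_self_eq_norm_sq]; exact h1
        rw [← h2, Real.sqrt_sq (norm_nonneg _)]
      calc |∫ x in ball y R, ⟪Real.sqrt (w k x) • g k x, V x⟫|
          = |⟪(hfmem k).toLp _, hVmem.toLp V⟫| := by rw [hip]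
        _ ≤ ‖(hfmem k).toLp _‖ * ‖hVmem.toLp V‖ := abs_real_inner_le_norm _ _
        _ = Real.sqrt (∫ x in ball y R, w k x * ‖g k x‖ ^ 2) * cV := by rw [hnormF]
    -- the inner integrals tend to 0
    have tend0 : Tendsto (fun k => ∫ x in ball y R, ⟪Real.sqrt (w k x) • g k x, V x⟫)
        atTop (nhds 0) := by
      have h1 : Tendsto (fun k =>
          Real.sqrt (∫ x in ball y R, w k x * ‖g k x‖ ^ 2)) atTop (nhds 0) := by
        have := (Real.continuous_sqrt.tendsto' 0 0 Real.sqrt_zero).comp hak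
        exact this
      have h2 : Tendsto (fun k =>
          Real.sqrt (∫ x in ball y R, w k x * ‖g k x‖ ^ 2) * cV) atTop (nhds 0) := by
        simpa using h1.mul_const cV
      exact squeeze_zero_norm (fun k => by rw [Real.norm_eq_abs]; exact est k) h2
    -- weak convergence with test function φ = indicator of the ball times V
    have hφ : MemLp ((ball y R).indicator V) 2 (volume.restrict Ω) :=
      hV.indicator measurableSet_ball
    have hwk := hweak _ hφ
    have eqf : ∀ f : Euc n → Euc n,
        ∫ x in Ω, ⟪f x, (ball y R).indicator V x⟫ = ∫ x in ball y R, ⟪f x, V x⟫ := by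
      intro f
      have h1 : ∀ x, ⟪f x, (ball y R).indicator V x⟫ =
          (ball y R).indicator (fun x => ⟪f x, V x⟫) x := by
        intro x
        by_cases hx : x ∈ ball y R <;> simp [Set.indicator, hx]
      calc ∫ x in Ω, ⟪f x, (ball y R).indicator V x⟫
          = ∫ x in Ω, (ball y R).indicator (fun x => ⟪f x, V x⟫) x :=
            integral_congr_ae (Filter.Eventually.of_forall fun x => h1 x)
        _ = ∫ x in Ω ∩ ball y R, ⟪f x, V x⟫ := setIntegral_indicator measurableSet_ball
        _ = ∫ x in ball y R, ⟪f x, V x⟫ := by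
            rw [Set.inter_eq_self_of_subset_right hBΩ]
    have hwk' : Tendsto (fun k => ∫ x in ball y R, ⟪Real.sqrt (w k x) • g k x, V x⟫)
        atTop (nhds (∫ x in ball y R, ⟪V x, V x⟫)) := by
      have e1 : (fun k => ∫ x in Ω, ⟪Real.sqrt (w k x) • g k x, (ball y R).indicator V x⟫) =
          fun k => ∫ x in ball y R, ⟪Real.sqrt (w k x) • g k x, V x⟫ :=
        funext fun k => eqf _
      rw [e1, eqf V] at hwk
      exact hwk
    -- conclude ∫ ‖V‖² = 0 on the ball
    have hVV : (∫ x in ball y R, ⟪V x, V x⟫) = 0 := tendsto_nhds_unique hwk' tend0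
    have hVsq : (∫ x in ball y R, ‖V x‖ ^ 2) = 0 := by
      rw [← hVV]
      exact integral_congr_ae (Filter.Eventually.of_forall fun x =>
        (real_inner_self_eq_norm_sq (V x)).symm)
    have hVint : Integrable (fun x => ‖V x‖ ^ 2) μB :=
      (memLp_two_iff_integrable_sq_norm hVmem.aestronglyMeasurable).1 hVmem
    have := (integral_eq_zero_iff_of_nonneg (fun x => sq_nonneg ‖V x‖) hVint).1 hVsq
    filter_upwards [this] with x hx
    have hx' : ‖V x‖ ^ 2 = 0 := hx
    exact norm_eq_zero.1 (pow_eq_zero_iff two_ne_zero |>.1 hx')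
  -- STEP 2: covering argument.
  -- For each point of the open set pick a ball.
  have hcov : ∀ x : Euc n, x ∈ Ω \ closure G → ∃ R : ℝ, 0 < R ∧
      ball x (2 * R) ⊆ Ω \ closure G := by
    intro x hx
    obtain ⟨ε, hε, hball⟩ := Metric.isOpen_iff.1 hUo x hx
    exact ⟨ε / 2, by linarith, by rw [show 2 * (ε / 2) = ε by ring]; exact hball⟩
  choose! Rad hRad hRadU using hcov
  -- the bad set
  set S : Set (Euc n) := {x | ¬ V x = 0} with hS
  have hnull : ∀ x (hx : x ∈ Ω \ closure G), volume (S ∩ ball x (Rad x)) = 0 := by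
    intro x hx
    have h := key x (Rad x) (hRad x hx) (hRadU x hx)
    have := (ae_iff).1 h
    rwa [Measure.restrict_apply' measurableSet_ball] at this
  -- countable subcover
  obtain ⟨T, hTc, hTeq⟩ := TopologicalSpace.isOpen_iUnion_countable
    (fun x : (Ω \ closure G : Set (Euc n)) => ball (x : Euc n) (Rad x))
    (fun x => isOpen_ball)
  have hsub : (Ω \ closure G) ⊆ ⋃ x ∈ T, ball (x : Euc n) (Rad (x : Euc n)) := by
    rw [hTeq]
    intro z hz
    exact Set.mem_iUnion.2 ⟨⟨z, hz⟩, mem_ball_self (hRad z hz)⟩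
  rw [ae_iff, Measure.restrict_apply' (hUo.measurableSet)]
  have hmono : {x | ¬ V x = 0} ∩ (Ω \ closure G) ⊆
      ⋃ x ∈ T, S ∩ ball (x : Euc n) (Rad (x : Euc n)) := by
    intro z hz
    obtain ⟨i, hiT, hzi⟩ := Set.mem_iUnion₂.1 (hsub hz.2)
    exact Set.mem_iUnion₂.2 ⟨i, hiT, hz.1, hzi⟩
  refine measure_mono_null hmono ?_
  refine (measure_biUnion_null_iff hTc).2 ?_
  intro i hiT
  exact hnull (i : Euc n) i.2
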